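/- (Criterion Theorem) Let l ≥ 2 be an integer, p a prime, and t₀ ≥ 1 the integer with p^{t₀-1} ≤ l < p^{t₀}. Let s = (s₁,…,s_l) be a tuple of positive integers, let |s| = s₁+⋯+s_l and m = min{sᵢ : 1 ≤ i ≤ l}. For t ≥ 1 set f(s,p;t) = min{ -v_p(H(s;n)) : p^{t-1} ≤ n < p^t }. If there exists an integer τ > t₀ such that f(s,p;τ) > (|s|-m)(τ-1) - m, then the set J(s|p) = {n ≥ 0 : p divides the numerator of H(s;n)} is finite. -/

import Mathlib

open Classical in
/-- Multiple harmonic sum `H(s₁,…,s_l; n) = ∑_{1 ≤ k₁ < ⋯ < k_l ≤ n} k₁^{-s₁} ⋯ k_l^{-s_l}`,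
encoded via strictly increasing tuples of indices in `{1,…,n}` (an empty sum is `0`,
and `mhs [] n = 1`). -/
noncomputable def mhs (s : List ℕ) (n : ℕ) : ℚ :=
  ∑ k ∈ Finset.univ.filter
      (fun k : Fin s.length → Fin (n + 1) =>
        StrictMono k ∧ ∀ i, 1 ≤ (k i : ℕ)),
    ∏ i, 1 / (((k i : ℕ) : ℚ) ^ s.get i)

open Classical in
/-- `p`-restricted multiple harmonic sum `H*(s; n)`: same sum with all indices
not divisible by `p`. -/
noncomputable def mhsStar (p : ℕ) (s : List ℕ) (n : ℕ) : ℚ :=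
  ∑ k ∈ Finset.univ.filter
      (fun k : Fin s.length → Fin (n + 1) =>
        StrictMono k ∧ ∀ i, 1 ≤ (k i : ℕ) ∧ ¬ p ∣ (k i : ℕ)),
    ∏ i, 1 / (((k i : ℕ) : ℚ) ^ s.get i)

section Aux

variable {p : ℕ} [hp : Fact p.Prime]

lemma vge_sum {ι : Type*} (T : Finset ι) (f : ι → ℚ) (c : ℤ)
    (h : ∀ i ∈ T, f i = 0 ∨ c ≤ padicValRat p (f i)) :
    (∑ i ∈ T, f i) = 0 ∨ c ≤ padicValRat p (∑ i ∈ T, f i) := by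
  induction T using Finset.cons_induction with
  | empty => simp
  | cons a T ha ih =>
    rw [Finset.sum_cons]
    have hfa := h a (Finset.mem_cons_self a T)
    have hS := ih (fun i hi => h i (Finset.mem_cons_of_mem hi))
    rcases hfa with h0 | hfa
    · rw [h0, zero_add]; exact hS
    rcases hS with h0 | hS
    · rw [h0, add_zero]; right; exact hfa
    by_cases hz : f a + ∑ i ∈ T, f i = 0
    · exact Or.inl hz
    · right
      calc c ≤ min (padicValRat p (f a)) (padicValRat p (∑ i ∈ T, f i)) := le_min hfa hS
        _ ≤ _ := padicValRat.min_le_padicValRat_add hz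

lemma term_val {L : ℕ} (e : Fin L → ℕ) {n : ℕ} (k : Fin L → Fin (n+1)) (hk : ∀ i, 1 ≤ (k i : ℕ)) :
    padicValRat p (∏ i, 1 / (((k i : ℕ) : ℚ) ^ e i)) =
      -∑ i, (e i : ℤ) * (padicValNat p (k i : ℕ) : ℤ) := by
  have hkz : ∀ i, ((k i : ℕ)) ≠ 0 := fun i => Nat.one_le_iff_ne_zero.mp (hk i)
  have hprod : (∏ i, 1 / (((k i : ℕ) : ℚ) ^ e i)) = ((∏ i, ((k i : ℕ)) ^ e i : ℕ) : ℚ)⁻¹ := by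
    push_cast
    rw [← Finset.prod_inv_distrib]
    simp [one_div]
  rw [hprod, padicValRat.inv, padicValRat.of_nat, neg_inj]
  have hfac : padicValNat p (∏ i, ((k i : ℕ)) ^ e i) = ∑ i, e i * padicValNat p (k i : ℕ) := by
    rw [← Nat.factorization_def _ hp.out,
      Nat.factorization_prod (fun i _ => pow_ne_zero _ (hkz i))]
    rw [Finset.sum_apply']
    exact Finset.sum_congr rfl fun i _ => by
      rw [Nat.factorization_pow, Finsupp.smul_apply, smul_eq_mul,
        Nat.factorization_def _ hp.out]
  rw [hfac]
  push_cast
  ring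

lemma padicValNat_le_of_lt_pow {a t : ℕ} (ha : a ≠ 0) (h : a < p ^ (t+1)) :
    padicValNat p a ≤ t := by
  by_contra hlt
  push_neg at hlt
  have : p ^ (t+1) ∣ a := dvd_trans (pow_dvd_pow p hlt) pow_padicValNat_dvd
  exact absurd (Nat.le_of_dvd (Nat.pos_of_ne_zero ha) this) (not_le.mpr h)

lemma term_vge {L : ℕ} (e : Fin L → ℕ) {M : ℕ} (hmin : ∀ i, M ≤ e i) {n t : ℕ}
    (hn : n < p ^ (t+1)) (k : Fin L → Fin (n+1)) (hk : ∀ i, 1 ≤ (k i : ℕ))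
    (i₀ : Fin L) (hi₀ : ¬ p ∣ (k i₀ : ℕ)) :
    -(((∑ i, (e i : ℤ)) - M) * (t : ℤ)) ≤ padicValRat p (∏ i, 1 / (((k i : ℕ) : ℚ) ^ e i)) := by
  rw [term_val e k hk, neg_le_neg_iff]
  have hv0 : padicValNat p (k i₀ : ℕ) = 0 := padicValNat.eq_zero_of_not_dvd hi₀
  have hvle : ∀ i, (padicValNat p (k i : ℕ) : ℤ) ≤ t := fun i => by
    exact_mod_cast padicValNat_le_of_lt_pow (Nat.one_le_iff_ne_zero.mp (hk i))
      (lt_of_le_of_lt (Nat.lt_succ_iff.mp (k i).isLt) hn)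
  have h1 : ∑ i, (e i : ℤ) * (padicValNat p (k i : ℕ) : ℤ)
      = ∑ i ∈ Finset.univ.erase i₀, (e i : ℤ) * (padicValNat p (k i : ℕ) : ℤ) := by
    rw [← Finset.add_sum_erase _ _ (Finset.mem_univ i₀), hv0]
    simp
  rw [h1]
  calc ∑ i ∈ Finset.univ.erase i₀, (e i : ℤ) * (padicValNat p (k i : ℕ) : ℤ)
      ≤ ∑ i ∈ Finset.univ.erase i₀, (e i : ℤ) * t := by
        refine Finset.sum_le_sum fun i _ => ?_
        exact mul_le_mul_of_nonneg_left (hvle i) (by positivity)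
    _ = (∑ i ∈ Finset.univ.erase i₀, (e i : ℤ)) * t := by rw [Finset.sum_mul]
    _ ≤ ((∑ i, (e i : ℤ)) - M) * t := by
        refine mul_le_mul_of_nonneg_right ?_ (by positivity)
        have h2 : ∑ i, (e i : ℤ) = (e i₀ : ℤ) + ∑ i ∈ Finset.univ.erase i₀, (e i : ℤ) :=
          (Finset.add_sum_erase _ _ (Finset.mem_univ i₀)).symm
        have hM : (M : ℤ) ≤ e i₀ := by exact_mod_cast hmin i₀
        omega

lemma sum_univ_get_int (s : List ℕ) : ∑ i : Fin s.length, (s.get i : ℤ) = (s.sum : ℤ) := by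
  have : ∑ i : Fin s.length, s.get i = s.sum := by
    simpa using Fin.sum_univ_get s
  exact_mod_cast this

open Classical in
lemma mhs_split (s : List ℕ) {m : ℕ} (hm : ∀ a ∈ s, m ≤ a) {n t : ℕ}
    (hn : n < p ^ (t+1)) :
    ∃ R : ℚ, mhs s n = ((p : ℚ) ^ s.sum)⁻¹ * mhs s (n / p) + R ∧
      (R = 0 ∨ -(((s.sum : ℤ) - m) * (t : ℤ)) ≤ padicValRat p R) := by
  classical
  have hp1 : 0 < p := hp.out.pos
  set L := s.length with hL
  set q := n / p with hq
  refine ⟨∑ k ∈ Finset.univ.filter (fun k : Fin L → Fin (n+1) =>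
      (StrictMono k ∧ ∀ i, 1 ≤ (k i : ℕ)) ∧ ¬ ∀ i, p ∣ (k i : ℕ)),
      ∏ i, 1 / (((k i : ℕ) : ℚ) ^ s.get i), ?_, ?_⟩
  · rw [mhs]
    rw [← Finset.sum_filter_add_sum_filter_not
      (Finset.univ.filter (fun k : Fin L → Fin (n+1) => StrictMono k ∧ ∀ i, 1 ≤ (k i : ℕ)))
      (fun k => ∀ i, p ∣ (k i : ℕ))]
    rw [Finset.filter_filter, Finset.filter_filter]
    congr 1
    rw [mhs, Finset.mul_sum]
    -- bijection k ↦ (fun i => k i / p)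
    refine Finset.sum_nbij' (i := fun (k : Fin L → Fin (n+1)) (i : Fin L) =>
        (⟨(k i : ℕ) / p, by
          have := Nat.div_le_div_right (c := p) (Nat.lt_succ_iff.mp (k i).isLt)
          omega⟩ : Fin (q+1)))
      (j := fun (j : Fin L → Fin (q+1)) (i : Fin L) =>
        (⟨p * (j i : ℕ), by
          have h1 : (j i : ℕ) ≤ q := Nat.lt_succ_iff.mp (j i).isLt
          have h2 : p * (j i : ℕ) ≤ p * q := Nat.mul_le_mul_left p h1
          have h3 : p * q ≤ n := by rw [hq, mul_comm]; exact Nat.div_mul_le_self n p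
          omega⟩ : Fin (n+1)))
      ?_ ?_ ?_ ?_ ?_
    · intro k hk
      simp only [Finset.mem_filter, Finset.mem_univ, true_and] at hk ⊢
      obtain ⟨⟨hmono, hone⟩, hdvd⟩ := hk
      refine ⟨fun i i' hii => ?_, fun i => ?_⟩
      · have : (k i : ℕ) < (k i' : ℕ) := hmono hii
        exact Nat.div_lt_div_of_lt_of_dvd (hdvd i') this
      · have := hone i
        have hd := hdvd i
        have : p ≤ (k i : ℕ) := Nat.le_of_dvd (by omega) hd
        exact Nat.one_le_div_iff hp1 |>.mpr this
    · intro j hj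
      simp only [Finset.mem_filter, Finset.mem_univ, true_and] at hj ⊢
      obtain ⟨hmono, hone⟩ := hj
      refine ⟨⟨fun i i' hii => ?_, fun i => ?_⟩, fun i => Dvd.intro _ rfl⟩
      · have : (j i : ℕ) < (j i' : ℕ) := hmono hii
        exact Nat.mul_lt_mul_left hp1 |>.mpr this
      · have := hone i
        exact Nat.one_le_iff_ne_zero.mpr (by positivity)
    · intro k hk
      simp only [Finset.mem_filter, Finset.mem_univ, true_and] at hk
      funext i
      exact Fin.ext (Nat.mul_div_cancel' (hk.2 i))
    · intro j hj
      funext i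
      exact Fin.ext (Nat.mul_div_cancel_left _ hp1)
    · intro k hk
      simp only [Finset.mem_filter, Finset.mem_univ, true_and] at hk
      obtain ⟨⟨hmono, hone⟩, hdvd⟩ := hk
      have key : ∀ i : Fin L, ((k i : ℕ) : ℚ) = (p : ℚ) * (((k i : ℕ) / p : ℕ) : ℚ) := by
        intro i
        rw [← Nat.cast_mul, Nat.mul_div_cancel' (hdvd i)]
      calc ∏ i, 1 / (((k i : ℕ) : ℚ) ^ s.get i)
          = ∏ i, (((p : ℚ) ^ s.get i)⁻¹ * (1 / ((((k i : ℕ) / p : ℕ) : ℚ) ^ s.get i))) := by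
            refine Finset.prod_congr rfl fun i _ => ?_
            rw [key i, mul_pow]
            rw [one_div, one_div, mul_inv]
        _ = (∏ i, ((p : ℚ) ^ s.get i)⁻¹) * ∏ i, 1 / ((((k i : ℕ) / p : ℕ) : ℚ) ^ s.get i) :=
            Finset.prod_mul_distrib
        _ = ((p : ℚ) ^ s.sum)⁻¹ * ∏ i, 1 / ((((k i : ℕ) / p : ℕ) : ℚ) ^ s.get i) := by
            rw [Finset.prod_inv_distrib]
            congr 1
            rw [Finset.prod_pow_eq_pow_sum]
            congr 1
            simpa using Fin.sum_univ_get s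
  · refine vge_sum _ _ _ fun k hk => ?_
    simp only [Finset.mem_filter, Finset.mem_univ, true_and] at hk
    obtain ⟨⟨hmono, hone⟩, hndvd⟩ := hk
    push_neg at hndvd
    obtain ⟨i₀, hi₀⟩ := hndvd
    right
    have hbound := term_vge (p := p) (fun i => s.get i) (M := m)
      (fun i => hm _ (by simp [List.get_mem])) hn k hone i₀ hi₀
    calc -(((s.sum : ℤ) - m) * (t : ℤ))
        = -(((∑ i : Fin L, (s.get i : ℤ)) - m) * (t : ℤ)) := by rw [sum_univ_get_int]
      _ ≤ _ := hbound

end Aux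

theorem stmt1 (l p : ℕ) (hl : 2 ≤ l) (hp : p.Prime)
    (s : List ℕ) (hlen : s.length = l) (hpos : ∀ a ∈ s, 0 < a)
    (t₀ : ℕ) (ht₀ : 1 ≤ t₀) (ht₀l : p ^ (t₀ - 1) ≤ l) (hlt₀ : l < p ^ t₀)
    (m : ℕ) (hm : m ∈ s) (hmin : ∀ a ∈ s, m ≤ a)
    (hcrit : ∃ τ : ℕ, t₀ < τ ∧
      ∀ n : ℕ, p ^ (τ - 1) ≤ n → n < p ^ τ →
        mhs s n ≠ 0 ∧
          ((s.sum : ℤ) - m) * ((τ : ℤ) - 1) - m < -(padicValRat p (mhs s n))) :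
    {n : ℕ | (p : ℤ) ∣ (mhs s n).num}.Finite := by
  haveI : Fact p.Prime := ⟨hp⟩
  obtain ⟨τ, hττ, hcrit⟩ := hcrit
  have hτ2 : 2 ≤ τ := by omega
  have hp1 : 1 < p := hp.one_lt
  -- s.sum ≥ l * m  ⇒ s.sum - m ≥ m
  have hlm : (l : ℤ) * m ≤ (s.sum : ℤ) := by
    have h : ∀ s' : List ℕ, (∀ a ∈ s', m ≤ a) → s'.length * m ≤ s'.sum := by
      intro s'
      induction s' with
      | nil => simp
      | cons a tl ih =>
        intro h
        simp only [List.length_cons, List.sum_cons]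
        have h1 := h a List.mem_cons_self
        have h2 := ih fun b hb => h b (List.mem_cons_of_mem a hb)
        nlinarith
    have h2 := h s hmin
    rw [hlen] at h2
    exact_mod_cast h2
  have hm1 : (1 : ℤ) ≤ m := by exact_mod_cast hpos m hm
  have hl2 : (2 : ℤ) ≤ l := by exact_mod_cast hl
  have hSm : (m : ℤ) ≤ (s.sum : ℤ) - m := by nlinarith
  -- main induction
  have key : ∀ t, τ ≤ t → ∀ n, p ^ (t - 1) ≤ n → n < p ^ t →
      mhs s n ≠ 0 ∧ ((s.sum : ℤ) - m) * ((t : ℤ) - 1) - m < -(padicValRat p (mhs s n)) := by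
    intro t ht
    induction t, ht using Nat.le_induction with
    | base => exact hcrit
    | succ t ht ih =>
      intro n hn1 hn2
      have ht1 : 1 ≤ t := by omega
      have hq1 : p ^ (t - 1) ≤ n / p := by
        rw [Nat.le_div_iff_mul_le (by omega)]
        calc p ^ (t - 1) * p = p ^ t := by
              rw [← pow_succ]; congr 1; omega
          _ ≤ n := by simpa [Nat.add_sub_cancel] using hn1
      have hq2 : n / p < p ^ t := by
        rw [Nat.div_lt_iff_lt_mul (by omega)]
        calc n < p ^ (t + 1) := by simpa [Nat.add_sub_cancel] using hn2
          _ = p ^ t * p := by rw [pow_succ]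
      obtain ⟨hq0, hqv⟩ := ih (n / p) hq1 hq2
      obtain ⟨R, hsplit, hR⟩ := mhs_split (p := p) s hmin
        (show n < p ^ (t + 1) by simpa [Nat.add_sub_cancel] using hn2)
      set a : ℚ := ((p : ℚ) ^ s.sum)⁻¹ * mhs s (n / p) with ha
      have hpq : (p : ℚ) ^ s.sum ≠ 0 := by positivity
      have ha0 : a ≠ 0 := mul_ne_zero (inv_ne_zero hpq) hq0
      have hva : padicValRat p a = -(s.sum : ℤ) + padicValRat p (mhs s (n / p)) := by
        rw [ha, padicValRat.mul (inv_ne_zero hpq) hq0, padicValRat.self_pow_inv]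
      have hvalt : padicValRat p a < -(((s.sum : ℤ) - m) * (t : ℤ)) := by
        have hr : ((s.sum : ℤ) - m) * ((t : ℤ)) = ((s.sum : ℤ) - m) * ((t : ℤ) - 1)
            + ((s.sum : ℤ) - m) := by ring
        rw [hva]
        linarith
      have hres : mhs s n ≠ 0 ∧ padicValRat p (mhs s n) = padicValRat p a := by
        by_cases hR0 : R = 0
        · rw [hsplit, hR0, add_zero]
          exact ⟨ha0, rfl⟩
        · rcases hR with h0 | hRv
          · exact absurd h0 hR0
          have hlt : padicValRat p a < padicValRat p R := lt_of_lt_of_le hvalt hRv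
          have hsum0 : a + R ≠ 0 := by
            intro h0
            have : R = -a := by linarith [h0]
            rw [this, padicValRat.neg] at hlt
            exact lt_irrefl _ hlt
          rw [hsplit]
          exact ⟨hsum0, by rw [padicValRat.add_eq_of_lt hsum0 ha0 hR0 hlt]⟩
      obtain ⟨hne, hveq⟩ := hres
      refine ⟨hne, ?_⟩
      rw [hveq, hva]
      have hc : ((t + 1 : ℕ) : ℤ) = (t : ℤ) + 1 := by push_cast; ring
      rw [hc]
      have hr : ((s.sum : ℤ) - m) * ((t : ℤ)) = ((s.sum : ℤ) - m) * ((t : ℤ) - 1)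
          + ((s.sum : ℤ) - m) := by ring
      linarith
  -- conclusion
  apply Set.Finite.subset (Set.finite_Iio (p ^ (τ - 1)))
  intro n hn
  simp only [Set.mem_setOf_eq] at hn
  by_contra hbig
  simp only [Set.mem_Iio, not_lt] at hbig
  have hn0 : n ≠ 0 := by
    intro h0
    rw [h0] at hbig
    have := Nat.one_le_pow (τ - 1) p (by omega)
    omega
  set t : ℕ := Nat.log p n + 1 with htdef
  have hn1 : p ^ (t - 1) ≤ n := by
    simpa [htdef] using Nat.pow_log_le_self p hn0
  have hn2 : n < p ^ t := Nat.lt_pow_succ_log_self hp1 n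
  have htτ : τ ≤ t := by
    have h1 : τ - 1 ≤ Nat.log p n := by
      rw [Nat.le_log_iff_pow_le hp1 hn0]
      exact le_trans hbig (le_refl n)
    omega
  obtain ⟨hne, hv⟩ := key t htτ n hn1 hn2
  -- the bound is nonnegative ⇒ padicValRat < 0 ⇒ p ∤ numerator
  have ht2 : (2 : ℤ) ≤ t := by exact_mod_cast le_trans hτ2 htτ
  have hb0 : (0 : ℤ) ≤ ((s.sum : ℤ) - m) * ((t : ℤ) - 1) - m := by nlinarith
  have hvneg : padicValRat p (mhs s n) < 0 := by linarith
  -- p divides numerator, so the valuation is ≥ 0: contradiction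
  have hnum : (mhs s n).num ≠ 0 := Rat.num_ne_zero.mpr hne
  have hpden : p ∣ (mhs s n).den := by
    have : padicValRat p (mhs s n) =
        (padicValInt p (mhs s n).num : ℤ) - padicValNat p (mhs s n).den := rfl
    rw [this] at hvneg
    have h1 : (0 : ℤ) ≤ padicValInt p (mhs s n).num := by positivity
    have h2 : 1 ≤ padicValNat p (mhs s n).den := by omega
    exact dvd_of_one_le_padicValNat h2
  have hpnum : p ∣ (mhs s n).num.natAbs := Int.natCast_dvd_natCast.mp
    (by simpa using (Int.dvd_natAbs.mpr hn))
  have hcop := (mhs s n).reduced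
  have : p ∣ Nat.gcd (mhs s n).num.natAbs (mhs s n).den := Nat.dvd_gcd hpnum hpden
  rw [Nat.Coprime] at hcop
  rw [hcop] at this
  have := Nat.le_of_dvd one_pos this
  omega
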